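/- Let G = (V,E) be a finite graph with a vertex- and edge-transitive automorphism group preserving scale 𝒮 = {B(i,S)}. Then the maximum of ∑_i η_i over feasible (η, κ) of the weighted isoperimetric problem equals (|V|/|E|)·γ(G,𝒮), where γ(G,𝒮) = min{|∂T|/|T| : ∅ ≠ T ⊆ S ∈ 𝒮} is the Cheeger constant at scale 𝒮. -/

import Mathlib

open scoped Classical

section Aux

open SimpleGraph Finset

variable {V : Type*} [Fintype V] [DecidableEq V] {G : SimpleGraph V} [DecidableRel G.Adj]

lemma aux_dist_le (φ : G ≃g G) (u v : V) : G.dist (φ u) (φ v) ≤ G.dist u v := by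
  by_cases h : G.Reachable u v
  · obtain ⟨p, hp⟩ := h.exists_walk_length_eq_dist
    calc G.dist (φ u) (φ v) ≤ (p.map φ.toHom).length := dist_le _
      _ = G.dist u v := by rw [Walk.length_map, hp]
  · rw [dist_eq_zero_of_not_reachable h, dist_eq_zero_of_not_reachable]
    intro hr
    exact h (Iso.reachable_iff.mp hr)

lemma aux_dist_eq (φ : G ≃g G) (u v : V) : G.dist (φ u) (φ v) = G.dist u v := by
  refine le_antisymm (aux_dist_le φ u v) ?_
  have := aux_dist_le φ.symm (φ u) (φ v)
  simpa using this

lemma aux_ball_image (φ : G ≃g G) (S : ℕ) (i : V) :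
    (Finset.univ.filter fun u => G.Reachable i u ∧ G.dist i u ≤ S).image φ
      = Finset.univ.filter fun u => G.Reachable (φ i) u ∧ G.dist (φ i) u ≤ S := by
  ext u
  simp only [Finset.mem_image, Finset.mem_filter, Finset.mem_univ, true_and]
  constructor
  · rintro ⟨w, ⟨hr, hd⟩, rfl⟩
    refine ⟨(Iso.reachable_iff (φ := φ)).mpr hr, ?_⟩
    rw [aux_dist_eq]; exact hd
  · rintro ⟨hr, hd⟩
    refine ⟨φ.symm u, ⟨?_, ?_⟩, by simp⟩
    · have h1 : G.Reachable (φ i) (φ (φ.symm u)) := by simpa using hr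
      exact Iso.reachable_iff.mp h1
    · have h2 := aux_dist_eq φ i (φ.symm u)
      rw [show φ (φ.symm u) = u by simp] at h2
      rw [← h2]; exact hd

lemma aux_edge_mem (φ : G ≃g G) {e : Sym2 V} (he : e ∈ G.edgeFinset) :
    Sym2.map φ e ∈ G.edgeFinset := by
  induction e with
  | _ a b =>
    rw [Sym2.map_pair_eq, mem_edgeFinset, mem_edgeSet] at *
    exact φ.map_rel_iff.mpr he

lemma aux_map_symm (φ : G ≃g G) (z : Sym2 V) :
    Sym2.map φ.symm (Sym2.map φ z) = z := by
  induction z with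
  | _ a b => simp [Sym2.map_pair_eq]

lemma aux_bd_image (φ : G ≃g G) (T : Finset V) :
    (G.edgeFinset.filter fun e => ∃ a b, e = s(a, b) ∧ a ∈ T.image φ ∧ b ∉ T.image φ)
      = (G.edgeFinset.filter fun e => ∃ a b, e = s(a, b) ∧ a ∈ T ∧ b ∉ T).image
          (Sym2.map φ) := by
  ext e
  simp only [Finset.mem_image, Finset.mem_filter]
  constructor
  · rintro ⟨he, a, b, rfl, ha, hb⟩
    obtain ⟨a', ha', rfl⟩ := ha
    refine ⟨s(a', φ.symm b), ⟨?_, a', φ.symm b, rfl, ha', ?_⟩, ?_⟩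
    · rw [mem_edgeFinset, mem_edgeSet] at he ⊢
      have h1 : G.Adj (φ a') (φ (φ.symm b)) := by simpa using he
      exact φ.map_rel_iff.mp h1
    · intro hmem
      exact hb ⟨φ.symm b, hmem, by simp⟩
    · rw [Sym2.map_pair_eq]
      simp
  · rintro ⟨f, ⟨hf, a, b, rfl, ha, hb⟩, rfl⟩
    rw [Sym2.map_pair_eq]
    refine ⟨?_, φ a, φ b, rfl, ⟨a, ha, rfl⟩, ?_⟩
    · rw [← Sym2.map_pair_eq]
      exact aux_edge_mem φ hf
    · intro hmem
      obtain ⟨t, ht, hteq⟩ := hmem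
      exact hb (φ.toEquiv.injective hteq ▸ ht)

lemma aux_vertex_fiber [Fintype (G ≃g G)] (hv : ∀ i j : V, ∃ f : G ≃g G, f i = j)
    (t t' y y' : V) :
    (Finset.univ.filter fun g : G ≃g G => g t = y).card
      = (Finset.univ.filter fun g : G ≃g G => g t' = y').card := by
  obtain ⟨h₁, hh₁⟩ := hv t' t
  obtain ⟨h₂, hh₂⟩ := hv y y'
  refine Finset.card_bij' (fun g _ => (h₁.trans g).trans h₂)
    (fun g _ => (h₁.symm.trans g).trans h₂.symm) ?_ ?_ ?_ ?_
  · intro g hg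
    rw [Finset.mem_filter] at hg ⊢
    refine ⟨Finset.mem_univ _, ?_⟩
    show h₂ (g (h₁ t')) = y'
    rw [hh₁, hg.2, hh₂]
  · intro g hg
    rw [Finset.mem_filter] at hg ⊢
    refine ⟨Finset.mem_univ _, ?_⟩
    show h₂.symm (g (h₁.symm t)) = y
    rw [show h₁.symm t = t' by rw [← hh₁]; simp, hg.2, ← hh₂]
    simp
  · intro g hg
    apply RelIso.toEquiv_injective
    ext x
    simp [RelIso.trans]
  · intro g hg
    apply RelIso.toEquiv_injective
    ext x
    simp [RelIso.trans]

lemma aux_edge_fiber [Fintype (G ≃g G)] {f f' e e' : Sym2 V}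
    (h1 : ∃ h : G ≃g G, Sym2.map h f' = f) (h2 : ∃ h : G ≃g G, Sym2.map h e = e') :
    (Finset.univ.filter fun g : G ≃g G => Sym2.map g f = e).card
      = (Finset.univ.filter fun g : G ≃g G => Sym2.map g f' = e').card := by
  obtain ⟨h₁, hh₁⟩ := h1
  obtain ⟨h₂, hh₂⟩ := h2
  have comp : ∀ (a b : G ≃g G) (z : Sym2 V),
      Sym2.map (a.trans b) z = Sym2.map b (Sym2.map a z) := by
    intro a b z
    rw [Sym2.map_map]
    rfl
  refine Finset.card_bij' (fun g _ => (h₁.trans g).trans h₂)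
    (fun g _ => (h₁.symm.trans g).trans h₂.symm) ?_ ?_ ?_ ?_
  · intro g hg
    rw [Finset.mem_filter] at hg ⊢
    refine ⟨Finset.mem_univ _, ?_⟩
    rw [comp, comp, hh₁, hg.2, hh₂]
  · intro g hg
    rw [Finset.mem_filter] at hg ⊢
    refine ⟨Finset.mem_univ _, ?_⟩
    rw [comp, comp, show Sym2.map h₁.symm f = f' by rw [← hh₁, aux_map_symm], hg.2,
      ← hh₂, aux_map_symm]
  · intro g hg
    apply RelIso.toEquiv_injective
    ext x
    simp [RelIso.trans]
  · intro g hg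
    apply RelIso.toEquiv_injective
    ext x
    simp [RelIso.trans]

end Aux

/-- For a vertex- and edge-transitive finite graph with scale given by balls of
radius `S`, the maximum of `∑ η_i` over feasible `(η, κ)` of the weighted
isoperimetric problem equals `(|V|/|E|)·γ(G,𝒮)`, where `γ(G,𝒮)` is the Cheeger
constant at scale `𝒮`. -/
theorem stmt17 {V : Type*} [Fintype V] [DecidableEq V]
    (G : SimpleGraph V) [DecidableRel G.Adj] (S : ℕ)
    (hv : ∀ i j : V, ∃ f : G ≃g G, f i = j)
    (he : ∀ e₁ ∈ G.edgeFinset, ∀ e₂ ∈ G.edgeFinset,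
      ∃ f : G ≃g G, Sym2.map f e₁ = e₂)
    (ball : V → Finset V)
    (hball : ∀ i, ball i = Finset.univ.filter fun u => G.Reachable i u ∧ G.dist i u ≤ S)
    (bd : Finset V → Finset (Sym2 V))
    (hbd : ∀ T, bd T = G.edgeFinset.filter fun e => ∃ a b, e = s(a, b) ∧ a ∈ T ∧ b ∉ T)
    (γ : ℝ)
    (hγ : IsLeast {x : ℝ | ∃ (i : V) (T : Finset V), T.Nonempty ∧ T ⊆ ball i ∧
      x = ((bd T).card : ℝ) / (T.card : ℝ)} γ) :
    IsGreatest {x : ℝ | ∃ (η : V → ℝ) (κ : Sym2 V → ℝ),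
        (∀ e, 0 ≤ κ e) ∧ (∑ e ∈ G.edgeFinset, κ e ≤ 1) ∧
        (∀ i : V, ∀ T ⊆ ball i, ∑ j ∈ T, η j ≤ ∑ e ∈ bd T, κ e) ∧
        x = ∑ i, η i}
      ((Fintype.card V : ℝ) / (G.edgeFinset.card : ℝ) * γ) := by
  classical
  have hmemball : ∀ i : V, i ∈ ball i := by
    intro i
    rw [hball]
    exact Finset.mem_filter.mpr ⟨Finset.mem_univ _, SimpleGraph.Reachable.refl i, by simp [SimpleGraph.dist_self]⟩
  constructor
  · -- membership
    by_cases hE : G.edgeFinset.card = 0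
    · have hEF : G.edgeFinset = ∅ := Finset.card_eq_zero.mp hE
      have hbd0 : ∀ T, bd T = ∅ := by
        intro T; rw [hbd, hEF]; simp
      have hγ' : γ = 0 := by
        obtain ⟨i, T, hT, hTb, h⟩ := hγ.1
        rw [h, hbd0]; simp
      refine ⟨fun _ => 0, fun _ => 0, fun e => le_refl 0, by simp, fun i T hT => by simp, ?_⟩
      simp [hγ']
    · have hEpos : (0:ℝ) < (G.edgeFinset.card : ℝ) := by
        exact_mod_cast Nat.pos_of_ne_zero hE
      refine ⟨fun _ => γ / (G.edgeFinset.card : ℝ), fun _ => 1 / (G.edgeFinset.card : ℝ),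
        ?_, ?_, ?_, ?_⟩
      · intro e; positivity
      · rw [Finset.sum_const, nsmul_eq_mul]
        rw [mul_one_div, div_self (ne_of_gt hEpos)]
      · intro i T hT
        rw [Finset.sum_const, Finset.sum_const, nsmul_eq_mul, nsmul_eq_mul]
        rcases T.eq_empty_or_nonempty with rfl | hTne
        · have : bd (∅ : Finset V) = ∅ := by rw [hbd]; simp
          simp [this]
        · have hγle : γ ≤ ((bd T).card : ℝ) / (T.card : ℝ) := hγ.2 ⟨i, T, hTne, hT, rfl⟩
          have hTpos : (0:ℝ) < (T.card : ℝ) := by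
            exact_mod_cast Finset.card_pos.mpr hTne
          have h1 : γ * (T.card : ℝ) ≤ ((bd T).card : ℝ) := by
            rw [← le_div_iff₀ hTpos]; exact hγle
          calc (T.card : ℝ) * (γ / (G.edgeFinset.card : ℝ))
              = (γ * (T.card : ℝ)) / (G.edgeFinset.card : ℝ) := by ring
            _ ≤ ((bd T).card : ℝ) / (G.edgeFinset.card : ℝ) := by gcongr
            _ = ((bd T).card : ℝ) * (1 / (G.edgeFinset.card : ℝ)) := by ring
      · rw [Finset.sum_const, Finset.card_univ, nsmul_eq_mul]
        ring
  · -- upper bound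
    rintro x ⟨η, κ, hκ0, hκ1, hfeas, rfl⟩
    by_cases hE : G.edgeFinset.card = 0
    · have hEF : G.edgeFinset = ∅ := Finset.card_eq_zero.mp hE
      have hbd0 : ∀ T, bd T = ∅ := by
        intro T; rw [hbd, hEF]; simp
      have h0 : ∀ i, η i ≤ 0 := by
        intro i
        have h := hfeas i {i} (by
          intro j hj
          rw [Finset.mem_singleton] at hj
          rw [hj]
          exact hmemball i)
        simpa [hbd0] using h
      have hsum : ∑ i, η i ≤ 0 := Finset.sum_nonpos fun i _ => h0 i
      calc ∑ i, η i ≤ 0 := hsum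
        _ = (Fintype.card V : ℝ) / (G.edgeFinset.card : ℝ) * γ := by
            rw [hEF]; simp
    · -- main case
      haveI : Fintype (G ≃g G) :=
        Fintype.ofInjective (fun f => (f.toEquiv : V ≃ V)) RelIso.toEquiv_injective
      obtain ⟨i₀, T, hTne, hTb, hγeq⟩ := hγ.1
      obtain ⟨f₀, hf₀⟩ := Finset.card_pos.mp (Nat.pos_of_ne_zero hE)
      set Sg := ∑ i, η i with hSg
      set cV := (Finset.univ.filter fun g : G ≃g G => g i₀ = i₀).card with hcV
      set dE := (Finset.univ.filter fun g : G ≃g G => Sym2.map g f₀ = f₀).card with hdE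
      have hcVconst : ∀ t y : V,
          (Finset.univ.filter fun g : G ≃g G => g t = y).card = cV :=
        fun t y => aux_vertex_fiber hv t i₀ y i₀
      have hdEconst : ∀ f ∈ G.edgeFinset, ∀ e ∈ G.edgeFinset,
          (Finset.univ.filter fun g : G ≃g G => Sym2.map g f = e).card = dE := by
        intro f hf e heM
        exact aux_edge_fiber (he f₀ hf₀ f hf) (he e heM f₀ hf₀)
      -- total counts
      have hVΓ : Fintype.card (G ≃g G) = Fintype.card V * cV := by
        rw [← Finset.card_univ, Finset.card_eq_sum_card_fiberwise
          (f := fun g : G ≃g G => g i₀) (t := Finset.univ) (fun g _ => Finset.mem_univ _)]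
        rw [Finset.sum_congr rfl fun y _ => hcVconst i₀ y, Finset.sum_const,
          Finset.card_univ, smul_eq_mul]
      have hEΓ : Fintype.card (G ≃g G) = G.edgeFinset.card * dE := by
        rw [← Finset.card_univ, Finset.card_eq_sum_card_fiberwise
          (f := fun g : G ≃g G => Sym2.map g f₀) (t := G.edgeFinset)
          (fun g _ => aux_edge_mem g hf₀)]
        rw [Finset.sum_congr rfl fun e heM => hdEconst f₀ hf₀ e heM, Finset.sum_const,
          smul_eq_mul]
      have hΓpos : 0 < Fintype.card (G ≃g G) :=
        Fintype.card_pos_iff.mpr ⟨RelIso.refl G.Adj⟩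
      -- per-vertex averaging
      have hstep1 : ∀ t : V, (∑ g : G ≃g G, η (g t)) = (cV : ℝ) * Sg := by
        intro t
        rw [← Finset.sum_fiberwise_of_maps_to
          (g := fun g : G ≃g G => g t) (t := Finset.univ)
          (fun g _ => Finset.mem_univ _) (fun g => η (g t))]
        rw [hSg, Finset.mul_sum]
        refine Finset.sum_congr rfl fun y _ => ?_
        have : ∀ g ∈ Finset.univ.filter fun g : G ≃g G => g t = y, η (g t) = η y := by
          intro g hg
          rw [(Finset.mem_filter.mp hg).2]
        rw [Finset.sum_congr rfl this, Finset.sum_const, hcVconst t y, nsmul_eq_mul]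
      have hstep2 : ∀ f ∈ G.edgeFinset,
          (∑ g : G ≃g G, κ (Sym2.map g f)) = (dE : ℝ) * ∑ e ∈ G.edgeFinset, κ e := by
        intro f hf
        rw [← Finset.sum_fiberwise_of_maps_to
          (g := fun g : G ≃g G => Sym2.map g f) (t := G.edgeFinset)
          (fun g _ => aux_edge_mem g hf) (fun g => κ (Sym2.map g f))]
        rw [Finset.mul_sum]
        refine Finset.sum_congr rfl fun e heM => ?_
        have : ∀ g ∈ Finset.univ.filter fun g : G ≃g G => Sym2.map g f = e,
            κ (Sym2.map g f) = κ e := by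
          intro g hg
          rw [(Finset.mem_filter.mp hg).2]
        rw [Finset.sum_congr rfl this, Finset.sum_const, hdEconst f hf e heM, nsmul_eq_mul]
      -- feasibility for each translate
      have hTsub : ∀ g : G ≃g G, T.image g ⊆ ball (g i₀) := by
        intro g
        rw [hball]
        rw [← aux_ball_image g S i₀]
        apply Finset.image_subset_image
        rw [← hball]
        exact hTb
      have hkey : ∀ g : G ≃g G, ∑ j ∈ T.image g, η j ≤ ∑ e ∈ bd (T.image g), κ e :=
        fun g => hfeas (g i₀) (T.image g) (hTsub g)
      -- sum over the group
      have hginj : ∀ g : G ≃g G, ∀ a ∈ T, ∀ b ∈ T, g a = g b → a = b :=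
        fun g a _ b _ hab => g.toEquiv.injective hab
      have hLHS : (∑ g : G ≃g G, ∑ j ∈ T.image g, η j) = (T.card : ℝ) * ((cV : ℝ) * Sg) := by
        have h1 : ∀ g : G ≃g G, ∑ j ∈ T.image g, η j = ∑ t ∈ T, η (g t) :=
          fun g => Finset.sum_image (hginj g)
        rw [Finset.sum_congr rfl fun g _ => h1 g, Finset.sum_comm]
        rw [Finset.sum_congr rfl fun t _ => hstep1 t, Finset.sum_const, nsmul_eq_mul]
      have hbdsub : bd T ⊆ G.edgeFinset := by rw [hbd]; exact Finset.filter_subset _ _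
      have hRHS : (∑ g : G ≃g G, ∑ e ∈ bd (T.image g), κ e)
          = ((bd T).card : ℝ) * ((dE : ℝ) * ∑ e ∈ G.edgeFinset, κ e) := by
        have h1 : ∀ g : G ≃g G, ∑ e ∈ bd (T.image g), κ e
            = ∑ f ∈ bd T, κ (Sym2.map g f) := by
          intro g
          rw [hbd, aux_bd_image g T, ← hbd]
          exact Finset.sum_image fun a _ b _ hab => Sym2.map.injective g.toEquiv.injective hab
        rw [Finset.sum_congr rfl fun g _ => h1 g, Finset.sum_comm]
        rw [Finset.sum_congr rfl fun f hf => hstep2 f (hbdsub hf), Finset.sum_const,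
          nsmul_eq_mul]
      have hmain : (T.card : ℝ) * ((cV : ℝ) * Sg)
          ≤ ((bd T).card : ℝ) * ((dE : ℝ) * ∑ e ∈ G.edgeFinset, κ e) := by
        rw [← hLHS, ← hRHS]
        exact Finset.sum_le_sum fun g _ => hkey g
      have hdE0 : (0:ℝ) ≤ (dE : ℝ) := Nat.cast_nonneg _
      have hbd0 : (0:ℝ) ≤ ((bd T).card : ℝ) := Nat.cast_nonneg _
      have hmain2 : (T.card : ℝ) * (cV : ℝ) * Sg ≤ ((bd T).card : ℝ) * (dE : ℝ) := by
        have h2 : ((bd T).card : ℝ) * ((dE : ℝ) * ∑ e ∈ G.edgeFinset, κ e)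
            ≤ ((bd T).card : ℝ) * ((dE : ℝ) * 1) := by
          apply mul_le_mul_of_nonneg_left _ hbd0
          exact mul_le_mul_of_nonneg_left hκ1 hdE0
        calc (T.card : ℝ) * (cV : ℝ) * Sg = (T.card : ℝ) * ((cV : ℝ) * Sg) := by ring
          _ ≤ ((bd T).card : ℝ) * ((dE : ℝ) * ∑ e ∈ G.edgeFinset, κ e) := hmain
          _ ≤ ((bd T).card : ℝ) * ((dE : ℝ) * 1) := h2
          _ = ((bd T).card : ℝ) * (dE : ℝ) := by ring
      -- final algebra
      have hVpos : (0:ℝ) < (Fintype.card V : ℝ) := by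
        exact_mod_cast Fintype.card_pos_iff.mpr ⟨i₀⟩
      have hEpos : (0:ℝ) < (G.edgeFinset.card : ℝ) := by
        exact_mod_cast Nat.pos_of_ne_zero hE
      have hTpos : (0:ℝ) < (T.card : ℝ) := by
        exact_mod_cast Finset.card_pos.mpr hTne
      have hΓr : (0:ℝ) < (Fintype.card (G ≃g G) : ℝ) := by exact_mod_cast hΓpos
      have h2r : (Fintype.card (G ≃g G) : ℝ) = (Fintype.card V : ℝ) * (cV : ℝ) := by
        exact_mod_cast hVΓ
      have h3r : (Fintype.card (G ≃g G) : ℝ) = (G.edgeFinset.card : ℝ) * (dE : ℝ) := by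
        exact_mod_cast hEΓ
      rw [hγeq, div_mul_div_comm, le_div_iff₀ (by positivity)]
      have h6 : Sg * ((G.edgeFinset.card : ℝ) * (T.card : ℝ))
            * (Fintype.card (G ≃g G) : ℝ)
          ≤ (Fintype.card V : ℝ) * ((bd T).card : ℝ) * (Fintype.card (G ≃g G) : ℝ) := by
        calc Sg * ((G.edgeFinset.card : ℝ) * (T.card : ℝ)) * (Fintype.card (G ≃g G) : ℝ)
            = ((Fintype.card V : ℝ) * (G.edgeFinset.card : ℝ))
                * ((T.card : ℝ) * (cV : ℝ) * Sg) := by rw [h2r]; ring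
          _ ≤ ((Fintype.card V : ℝ) * (G.edgeFinset.card : ℝ))
                * (((bd T).card : ℝ) * (dE : ℝ)) :=
              mul_le_mul_of_nonneg_left hmain2 (by positivity)
          _ = (Fintype.card V : ℝ) * ((bd T).card : ℝ) * (Fintype.card (G ≃g G) : ℝ) := by
              rw [h3r]; ring
      exact le_of_mul_le_mul_right h6 hΓr
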